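/- For KL marginal penalties with equal parameters ρ₁ = ρ₂ = ρ and ε = 0, the translation-invariant dual functional satisfies H₀(f,g) = sup_λ D₀(f + λ, g − λ) = ρ[ m(α) + m(β) − 2√( ⟨α, e^{−f/ρ}⟩ · ⟨β, e^{−g/ρ}⟩ ) ]. -/
import Mathlib


open Real Finset
/-- For KL marginal penalties with `ρ₁ = ρ₂ = ρ` and `ε = 0`, the translation-invariant
dual functional `H₀(f,g) = sup_λ D₀(f+λ, g−λ)`, where
`D₀(f,g) = −ρΣᵢ(e^{−fᵢ/ρ}−1)αᵢ − ρΣⱼ(e^{−gⱼ/ρ}−1)βⱼ`, equals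
`ρ[m(α) + m(β) − 2√(⟨α, e^{−f/ρ}⟩ ⟨β, e^{−g/ρ}⟩)]`. -/
theorem ti_dual_functional_eps_zero
    {N M : ℕ} (α : Fin N → ℝ) (β : Fin M → ℝ)
    (hα : ∀ i, 0 ≤ α i) (hβ : ∀ j, 0 ≤ β j)
    (ρ : ℝ) (hρ : 0 < ρ)
    (f : Fin N → ℝ) (g : Fin M → ℝ)
    (D : (Fin N → ℝ) → (Fin M → ℝ) → ℝ)
    (hD : ∀ f' g', D f' g' =
      -(ρ * ∑ i, (Real.exp (-(f' i) / ρ) - 1) * α i)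
      - ρ * ∑ j, (Real.exp (-(g' j) / ρ) - 1) * β j) :
    IsLUB {v : ℝ | ∃ t : ℝ, v = D (fun i => f i + t) (fun j => g j - t)}
      (ρ * ((∑ i, α i) + (∑ j, β j)
        - 2 * Real.sqrt ((∑ i, α i * Real.exp (-(f i) / ρ))
            * (∑ j, β j * Real.exp (-(g j) / ρ))))) := by
  have hA0 : 0 ≤ ∑ i, α i * Real.exp (-(f i) / ρ) :=
    Finset.sum_nonneg fun i _ => mul_nonneg (hα i) (Real.exp_pos _).le
  have hB0 : 0 ≤ ∑ j, β j * Real.exp (-(g j) / ρ) :=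
    Finset.sum_nonneg fun j _ => mul_nonneg (hβ j) (Real.exp_pos _).le
  set A := ∑ i, α i * Real.exp (-(f i) / ρ) with hA
  set B := ∑ j, β j * Real.exp (-(g j) / ρ) with hB
  have hval : ∀ t : ℝ, D (fun i => f i + t) (fun j => g j - t)
      = ρ * ((∑ i, α i) + (∑ j, β j))
        - ρ * (A * Real.exp (-t / ρ) + B * Real.exp (t / ρ)) := by
    intro t
    rw [hD]
    have e1 : ∑ i, (Real.exp (-(f i + t) / ρ) - 1) * α i
        = A * Real.exp (-t / ρ) - ∑ i, α i := by
      rw [hA, Finset.sum_mul, ← Finset.sum_sub_distrib]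
      refine Finset.sum_congr rfl fun i _ => ?_
      rw [show -(f i + t) / ρ = -(f i) / ρ + -t / ρ by ring, Real.exp_add]
      ring
    have e2 : ∑ j, (Real.exp (-(g j - t) / ρ) - 1) * β j
        = B * Real.exp (t / ρ) - ∑ j, β j := by
      rw [hB, Finset.sum_mul, ← Finset.sum_sub_distrib]
      refine Finset.sum_congr rfl fun j _ => ?_
      rw [show -(g j - t) / ρ = -(g j) / ρ + t / ρ by ring, Real.exp_add]
      ring
    rw [e1, e2]; ring
  have hmem : ∀ t : ℝ,
      (ρ * ((∑ i, α i) + (∑ j, β j))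
        - ρ * (A * Real.exp (-t / ρ) + B * Real.exp (t / ρ)))
        ∈ {v : ℝ | ∃ t : ℝ, v = D (fun i => f i + t) (fun j => g j - t)} :=
    fun t => ⟨t, (hval t).symm⟩
  constructor
  · rintro v ⟨t, rfl⟩
    rw [hval t]
    have hx : 0 ≤ A * Real.exp (-t / ρ) := mul_nonneg hA0 (Real.exp_pos _).le
    have hy : 0 ≤ B * Real.exp (t / ρ) := mul_nonneg hB0 (Real.exp_pos _).le
    have hxy : (A * Real.exp (-t / ρ)) * (B * Real.exp (t / ρ)) = A * B := by
      have h1 : Real.exp (-t / ρ) * Real.exp (t / ρ) = 1 := by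
        rw [← Real.exp_add, neg_div, neg_add_cancel, Real.exp_zero]
      calc (A * Real.exp (-t / ρ)) * (B * Real.exp (t / ρ))
          = A * B * (Real.exp (-t / ρ) * Real.exp (t / ρ)) := by ring
        _ = A * B := by rw [h1, mul_one]
    have key : 2 * Real.sqrt (A * B)
        ≤ A * Real.exp (-t / ρ) + B * Real.exp (t / ρ) := by
      rw [← hxy, Real.sqrt_mul hx]
      nlinarith [sq_nonneg (Real.sqrt (A * Real.exp (-t / ρ)) - Real.sqrt (B * Real.exp (t / ρ))),
        Real.sq_sqrt hx, Real.sq_sqrt hy,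
        Real.sqrt_nonneg (A * Real.exp (-t / ρ)), Real.sqrt_nonneg (B * Real.exp (t / ρ))]
    nlinarith [mul_le_mul_of_nonneg_left key hρ.le]
  · intro b hb
    rcases eq_or_lt_of_le hA0 with hAz | hApos
    · -- A = 0
      have hαz : ∀ i ∈ Finset.univ, α i * Real.exp (-(f i) / ρ) = 0 :=
        (Finset.sum_eq_zero_iff_of_nonneg
          (fun i _ => mul_nonneg (hα i) (Real.exp_pos _).le)).mp hAz.symm
      have hmα : ∑ i, α i = 0 := Finset.sum_eq_zero fun i hi => by
        have := hαz i hi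
        have he := (Real.exp_pos (-(f i) / ρ)).ne'
        exact (mul_eq_zero.mp this).resolve_right he
      have hsq : Real.sqrt (A * B) = 0 := by rw [← hAz]; simp
      rcases eq_or_lt_of_le hB0 with hBz | hBpos
      · have h0 : ρ * ((∑ i, α i) + (∑ j, β j) - 2 * Real.sqrt (A * B))
            = ρ * ((∑ i, α i) + (∑ j, β j))
              - ρ * (A * Real.exp (-(0:ℝ) / ρ) + B * Real.exp ((0:ℝ) / ρ)) := by
          rw [hsq, ← hAz, ← hBz]; ring
        rw [h0]; exact hb (hmem 0)
      · refine le_of_forall_pos_le_add fun ε hε => ?_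
        set t := ρ * Real.log (ε / (ρ * B)) with ht
        have hexp : Real.exp (t / ρ) = ε / (ρ * B) := by
          rw [ht, mul_comm ρ _, mul_div_assoc, div_self hρ.ne', mul_one,
            Real.exp_log (div_pos hε (mul_pos hρ hBpos))]
        have hvt : ρ * ((∑ i, α i) + (∑ j, β j))
            - ρ * (A * Real.exp (-t / ρ) + B * Real.exp (t / ρ))
            = ρ * ((∑ i, α i) + (∑ j, β j)) - ε := by
          rw [hexp, ← hAz]
          field_simp
          ring
        have hle := hb (hmem t)
        rw [hvt] at hle
        rw [hsq]
        linarith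
    · rcases eq_or_lt_of_le hB0 with hBz | hBpos
      · -- B = 0
        have hsq : Real.sqrt (A * B) = 0 := by rw [← hBz]; simp
        refine le_of_forall_pos_le_add fun ε hε => ?_
        set t := -(ρ * Real.log (ε / (ρ * A))) with ht
        have hexp : Real.exp (-t / ρ) = ε / (ρ * A) := by
          rw [ht, neg_neg, mul_comm ρ _, mul_div_assoc, div_self hρ.ne', mul_one,
            Real.exp_log (div_pos hε (mul_pos hρ hApos))]
        have hvt : ρ * ((∑ i, α i) + (∑ j, β j))
            - ρ * (A * Real.exp (-t / ρ) + B * Real.exp (t / ρ))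
            = ρ * ((∑ i, α i) + (∑ j, β j)) - ε := by
          rw [hexp, ← hBz]
          field_simp
          ring
        have hle := hb (hmem t)
        rw [hvt] at hle
        rw [hsq]
        linarith
      · -- A > 0, B > 0
        set a := Real.sqrt A with ha
        set c := Real.sqrt B with hc
        have ha2 : a ^ 2 = A := Real.sq_sqrt hA0
        have hc2 : c ^ 2 = B := Real.sq_sqrt hB0
        have hap : 0 < a := Real.sqrt_pos.mpr hApos
        have hcp : 0 < c := Real.sqrt_pos.mpr hBpos
        set t := -(ρ * Real.log (c / a)) with ht
        have hexpn : Real.exp (-t / ρ) = c / a := by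
          rw [ht, neg_neg, mul_comm ρ _, mul_div_assoc, div_self hρ.ne', mul_one,
            Real.exp_log (div_pos hcp hap)]
        have hexpp : Real.exp (t / ρ) = a / c := by
          have : t / ρ = -(-t / ρ) := by ring
          rw [this, Real.exp_neg, hexpn, inv_div]
        have hsum : A * Real.exp (-t / ρ) + B * Real.exp (t / ρ)
            = 2 * Real.sqrt (A * B) := by
          rw [hexpn, hexpp, Real.sqrt_mul hA0, ← ha, ← hc, ← ha2, ← hc2]
          field_simp
          ring
        have h0 : ρ * ((∑ i, α i) + (∑ j, β j) - 2 * Real.sqrt (A * B))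
            = ρ * ((∑ i, α i) + (∑ j, β j))
              - ρ * (A * Real.exp (-t / ρ) + B * Real.exp (t / ρ)) := by
          rw [hsum]; ring
        rw [h0]; exact hb (hmem t)
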